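/- The reaction rates for the four species are compatible with the stoichiometry: the quantities 𝒥_i defined below satisfy 𝒥₁ = 𝒥₂ and 𝒥₃ = 𝒥₄ = −𝒥₁; that is, 𝒥_i = λ_i 𝒥₁ with λ₁ = λ₂ = 1 and λ₃ = λ₄ = −1. -/

import Mathlib

noncomputable section

/-- The upper incomplete gamma function `Γ(η, x) = ∫_x^∞ t^{η−1} e^{−t} dt`. -/
def iGamma (η x : ℝ) : ℝ := ∫ t in Set.Ioi x, t ^ (η - 1) * Real.exp (-t)

/-- Reduced mass. -/
def rmass (a b : ℝ) : ℝ := a * b / (a + b)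

lemma iGamma_one (x : ℝ) : iGamma 1 x = Real.exp (-x) := by
  unfold iGamma
  simp only [sub_self, Real.rpow_zero, one_mul]
  exact integral_exp_neg_Ioi x

lemma iGamma_two (x : ℝ) (hx : 0 ≤ x) : iGamma 2 x = (x + 1) * Real.exp (-x) := by
  have h : ∀ t ∈ Set.Ici x, HasDerivAt (fun t : ℝ => -((t + 1) * Real.exp (-t)))
      (t * Real.exp (-t)) t := by
    intro t _
    have he : HasDerivAt (fun t : ℝ => Real.exp (-t)) (-Real.exp (-t)) t := by
      simpa using (hasDerivAt_neg' t).exp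
    have h1 : HasDerivAt (fun t : ℝ => (t + 1) * Real.exp (-t))
        (1 * Real.exp (-t) + (t + 1) * (-Real.exp (-t))) t :=
      (hasDerivAt_id t |>.add_const 1).mul he
    have : HasDerivAt (fun t : ℝ => -((t + 1) * Real.exp (-t)))
        (-(1 * Real.exp (-t) + (t + 1) * (-Real.exp (-t)))) t := h1.neg
    convert this using 1
    ring
  have htend : Filter.Tendsto (fun t : ℝ => -((t + 1) * Real.exp (-t)))
      Filter.atTop (nhds 0) := by
    have h1 := Real.tendsto_pow_mul_exp_neg_atTop_nhds_zero 1
    simp only [pow_one] at h1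
    have h2 : Filter.Tendsto (fun t : ℝ => (t + 1) * Real.exp (-t))
        Filter.atTop (nhds 0) := by
      have h3 : (fun t : ℝ => (t + 1) * Real.exp (-t))
          = fun t => t * Real.exp (-t) + Real.exp (-t) := by
        funext t; ring
      rw [h3]
      simpa using h1.add (Real.tendsto_exp_neg_atTop_nhds_zero)
    simpa using h2.neg
  have hnn : ∀ t ∈ Set.Ioi x, 0 ≤ t * Real.exp (-t) := by
    intro t ht
    have : 0 ≤ t := le_trans hx (le_of_lt ht)
    positivity
  have key := MeasureTheory.integral_Ioi_of_hasDerivAt_of_nonneg' h hnn htend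
  have heq : iGamma 2 x = ∫ t in Set.Ioi x, t * Real.exp (-t) := by
    unfold iGamma
    congr 1
    funext t
    norm_num
  rw [heq, key]
  ring

lemma rmass_comm (a b : ℝ) : rmass a b = rmass b a := by
  unfold rmass; rw [mul_comm, add_comm]

lemma rmass_pos {a b : ℝ} (ha : 0 < a) (hb : 0 < b) : 0 < rmass a b := by
  unfold rmass; positivity

lemma sqrt_helper (k μ ν : ℝ) (hk : 0 ≤ k) (hμ : 0 < μ) (hν : 0 < ν) :
    Real.sqrt (k * ν) * Real.sqrt (ν / μ) * μ = Real.sqrt (k * μ) * ν := by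
  have h1 : Real.sqrt (k * ν) * Real.sqrt (ν / μ) * μ
      = Real.sqrt (k * ν * (ν / μ) * μ ^ 2) := by
    rw [Real.sqrt_mul (by positivity : (0:ℝ) ≤ k * ν * (ν / μ)) (μ ^ 2),
      Real.sqrt_mul (by positivity : (0:ℝ) ≤ k * ν) (ν / μ), Real.sqrt_sq hμ.le]
  have h2 : Real.sqrt (k * μ) * ν = Real.sqrt (k * μ * ν ^ 2) := by
    rw [Real.sqrt_mul (by positivity : (0:ℝ) ≤ k * μ) (ν ^ 2), Real.sqrt_sq hν.le]
  rw [h1, h2]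
  congr 1
  field_simp

/-- The reaction rates of the four species are compatible with the
stoichiometry: `𝒥₁ = 𝒥₂` and `𝒥₃ = 𝒥₄ = −𝒥₁`. -/
theorem reaction_rates_stoichiometry
    (m1 m2 m3 m4 : ℝ) (hm1 : 0 < m1) (hm2 : 0 < m2) (hm3 : 0 < m3) (hm4 : 0 < m4)
    (hM : m1 + m2 = m3 + m4)
    (QR σ T kB : ℝ) (hσ : 0 < σ) (hT : 0 < T) (hkB : 0 < kB)
    (ζ1 ζ2 ζ3 ζ4 : ℝ) (hζ1 : max 0 QR ≤ ζ1) (hζ12 : ζ2 = ζ1) (hζ3 : ζ3 = ζ1 - QR)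
    (hζ34 : ζ4 = ζ3)
    (c1 c2 c3 c4 : ℝ) (hc1 : 0 ≤ c1) (hc2 : 0 ≤ c2) (hc3 : 0 ≤ c3) (hc4 : 0 ≤ c4)
    (J1 J2 J3 J4 : ℝ)
    (hJ1 : J1 = σ ^ 2 * Real.sqrt (2 * Real.pi * rmass m1 m2 / (kB * T)) *
      (Real.sqrt (rmass m1 m2 / rmass m3 m4) * (c3 * c4) * Real.exp (QR / (kB * T))
        - c1 * c2) *
      ((2 * kB * T / rmass m1 m2) * iGamma 2 (ζ1 / (kB * T))
        - (2 * ζ1 / rmass m1 m2) * iGamma 1 (ζ1 / (kB * T))))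
    (hJ2 : J2 = σ ^ 2 * Real.sqrt (2 * Real.pi * rmass m2 m1 / (kB * T)) *
      (Real.sqrt (rmass m2 m1 / rmass m4 m3) * (c4 * c3) * Real.exp (QR / (kB * T))
        - c2 * c1) *
      ((2 * kB * T / rmass m2 m1) * iGamma 2 (ζ2 / (kB * T))
        - (2 * ζ2 / rmass m2 m1) * iGamma 1 (ζ2 / (kB * T))))
    (hJ3 : J3 = σ ^ 2 * Real.sqrt (2 * Real.pi * rmass m3 m4 / (kB * T)) *
      (Real.sqrt (rmass m3 m4 / rmass m1 m2) * (c1 * c2) * Real.exp (-QR / (kB * T))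
        - c3 * c4) *
      ((2 * kB * T / rmass m3 m4) * iGamma 2 (ζ3 / (kB * T))
        - (2 * ζ3 / rmass m3 m4) * iGamma 1 (ζ3 / (kB * T))))
    (hJ4 : J4 = σ ^ 2 * Real.sqrt (2 * Real.pi * rmass m4 m3 / (kB * T)) *
      (Real.sqrt (rmass m4 m3 / rmass m2 m1) * (c2 * c1) * Real.exp (-QR / (kB * T))
        - c4 * c3) *
      ((2 * kB * T / rmass m4 m3) * iGamma 2 (ζ4 / (kB * T))
        - (2 * ζ4 / rmass m4 m3) * iGamma 1 (ζ4 / (kB * T)))) :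
    J2 = J1 ∧ J3 = -J1 ∧ J4 = -J1 := by
  have hμ : 0 < rmass m1 m2 := rmass_pos hm1 hm2
  have hν : 0 < rmass m3 m4 := rmass_pos hm3 hm4
  have hθ : 0 < kB * T := mul_pos hkB hT
  have hζ1nn : 0 ≤ ζ1 := le_trans (le_max_left 0 QR) hζ1
  have hζ3nn : 0 ≤ ζ1 - QR := sub_nonneg.mpr (le_trans (le_max_right 0 QR) hζ1)
  have hz1 : 0 ≤ ζ1 / (kB * T) := div_nonneg hζ1nn hθ.le
  have hz3 : 0 ≤ (ζ1 - QR) / (kB * T) := div_nonneg hζ3nn hθ.le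
  -- exp identities
  have hE : Real.exp (-QR / (kB * T)) * Real.exp (QR / (kB * T)) = 1 := by
    rw [← Real.exp_add, show -QR / (kB * T) + QR / (kB * T) = 0 from by ring,
      Real.exp_zero]
  have hE3 : Real.exp (-((ζ1 - QR) / (kB * T)))
      = Real.exp (-(ζ1 / (kB * T))) * Real.exp (QR / (kB * T)) := by
    rw [← Real.exp_add]
    congr 1
    ring
  -- sqrt identities
  have hs1 : Real.sqrt (2 * Real.pi * rmass m3 m4 / (kB * T))
        * Real.sqrt (rmass m3 m4 / rmass m1 m2) * rmass m1 m2
      = Real.sqrt (2 * Real.pi * rmass m1 m2 / (kB * T)) * rmass m3 m4 := by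
    have h := sqrt_helper (2 * Real.pi / (kB * T)) (rmass m1 m2) (rmass m3 m4)
      (by positivity) hμ hν
    rw [show 2 * Real.pi / (kB * T) * rmass m3 m4
        = 2 * Real.pi * rmass m3 m4 / (kB * T) from by ring,
      show 2 * Real.pi / (kB * T) * rmass m1 m2
        = 2 * Real.pi * rmass m1 m2 / (kB * T) from by ring] at h
    exact h
  have hs2 : Real.sqrt (2 * Real.pi * rmass m1 m2 / (kB * T))
        * Real.sqrt (rmass m1 m2 / rmass m3 m4) * rmass m3 m4
      = Real.sqrt (2 * Real.pi * rmass m3 m4 / (kB * T)) * rmass m1 m2 := by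
    have h := sqrt_helper (2 * Real.pi / (kB * T)) (rmass m3 m4) (rmass m1 m2)
      (by positivity) hν hμ
    rw [show 2 * Real.pi / (kB * T) * rmass m3 m4
        = 2 * Real.pi * rmass m3 m4 / (kB * T) from by ring,
      show 2 * Real.pi / (kB * T) * rmass m1 m2
        = 2 * Real.pi * rmass m1 m2 / (kB * T) from by ring] at h
    exact h
  -- closed forms for J1, J3
  have hJ1' : J1 = σ ^ 2 * Real.sqrt (2 * Real.pi * rmass m1 m2 / (kB * T)) *
      (Real.sqrt (rmass m1 m2 / rmass m3 m4) * (c3 * c4) * Real.exp (QR / (kB * T))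
        - c1 * c2) * (2 * (kB * T) / rmass m1 m2) * Real.exp (-(ζ1 / (kB * T))) := by
    rw [hJ1, iGamma_two _ hz1, iGamma_one]
    field_simp
    ring
  have hJ3' : J3 = σ ^ 2 * Real.sqrt (2 * Real.pi * rmass m3 m4 / (kB * T)) *
      (Real.sqrt (rmass m3 m4 / rmass m1 m2) * (c1 * c2) * Real.exp (-QR / (kB * T))
        - c3 * c4) * (2 * (kB * T) / rmass m3 m4)
      * (Real.exp (-(ζ1 / (kB * T))) * Real.exp (QR / (kB * T))) := by
    rw [hJ3, hζ3, iGamma_two _ hz3, iGamma_one, hE3]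
    field_simp
    ring
  have h31 : J3 = -J1 := by
    have hμ1 : rmass m1 m2 * (rmass m1 m2)⁻¹ = 1 := mul_inv_cancel₀ hμ.ne'
    have hν1 : rmass m3 m4 * (rmass m3 m4)⁻¹ = 1 := mul_inv_cancel₀ hν.ne'
    rw [hJ3', hJ1']
    linear_combination
      (-(2 * (kB * T) * σ ^ 2 * Real.exp (-(ζ1 / (kB * T))) * c1 * c2
          * Real.sqrt (2 * Real.pi * rmass m3 m4 / (kB * T))
          * Real.sqrt (rmass m3 m4 / rmass m1 m2) / rmass m3 m4)
        + (2 * (kB * T) * σ ^ 2 * Real.exp (-(ζ1 / (kB * T))) * c3 * c4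
          * Real.exp (QR / (kB * T))
          * Real.sqrt (2 * Real.pi * rmass m3 m4 / (kB * T)) / rmass m3 m4)) * hμ1
      + ((2 * (kB * T) * σ ^ 2 * Real.exp (-(ζ1 / (kB * T))) * c1 * c2
          * Real.sqrt (2 * Real.pi * rmass m1 m2 / (kB * T)) / rmass m1 m2)
        - (2 * (kB * T) * σ ^ 2 * Real.exp (-(ζ1 / (kB * T))) * c3 * c4
          * Real.exp (QR / (kB * T))
          * Real.sqrt (2 * Real.pi * rmass m1 m2 / (kB * T))
          * Real.sqrt (rmass m1 m2 / rmass m3 m4) / rmass m1 m2)) * hν1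
      +
      (2 * (kB * T) * σ ^ 2 * Real.exp (-(ζ1 / (kB * T))) * c1 * c2
        * Real.sqrt (2 * Real.pi * rmass m3 m4 / (kB * T))
        * Real.sqrt (rmass m3 m4 / rmass m1 m2) / rmass m3 m4) * hE
      + (2 * (kB * T) * σ ^ 2 * Real.exp (-(ζ1 / (kB * T))) * c1 * c2
        / (rmass m1 m2 * rmass m3 m4)) * hs1
      + (2 * (kB * T) * σ ^ 2 * Real.exp (-(ζ1 / (kB * T))) * c3 * c4
        * Real.exp (QR / (kB * T)) / (rmass m1 m2 * rmass m3 m4)) * hs2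
  refine ⟨?_, h31, ?_⟩
  · rw [hJ2, hJ1, rmass_comm m2 m1, rmass_comm m4 m3, hζ12]
    ring
  · have h43 : J4 = J3 := by
      rw [hJ4, hJ3, rmass_comm m4 m3, rmass_comm m2 m1, hζ34]
      ring
    rw [h43, h31]
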